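/- Let K be a field with a multiplicative nonarchimedean absolute value ‖·‖, let c, x ∈ K with ‖c‖ > 1 and ‖x‖² ≠ ‖c‖, and let ψ_c(z) = z² + c. Then ‖ψ_c^k(x)‖ → +∞ as k → ∞. (Equivalently, the filled Julia set {x ∈ K : ‖ψ_c^k(x)‖ does not tend to ∞} is contained in the circle {x : ‖x‖² = ‖c‖}.) -/

import Mathlib

open Filter

theorem stmt13 (K : Type*) [NormedField K] [IsUltrametricDist K]
    (c x : K) (hc : 1 < ‖c‖) (hx : ‖x‖ ^ 2 ≠ ‖c‖) :
    Tendsto (fun k : ℕ => ‖(fun z : K => z ^ 2 + c)^[k] x‖) atTop atTop := by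
  set ψ : K → K := fun z => z ^ 2 + c with hψ
  have key : ∀ y : K, ‖c‖ < ‖y‖ ^ 2 → ∀ k, ‖ψ^[k] y‖ = ‖y‖ ^ (2 ^ k) := by
    intro y hy k
    induction k generalizing y with
    | zero => simp
    | succ k ih =>
      have hne : ‖y ^ 2‖ ≠ ‖c‖ := by rw [norm_pow]; exact ne_of_gt hy
      have h1 : ‖ψ y‖ = ‖y‖ ^ 2 := by
        rw [hψ]
        simp only
        rw [IsUltrametricDist.norm_add_eq_max_of_norm_ne_norm hne, norm_pow]
        exact max_eq_left (le_of_lt hy)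
      have hy1 : 1 < ‖y‖ ^ 2 := lt_trans hc hy
      have h2 : ‖c‖ < ‖ψ y‖ ^ 2 := by
        rw [h1]
        calc ‖c‖ < ‖y‖ ^ 2 := hy
        _ = 1 * ‖y‖ ^ 2 := (one_mul _).symm
        _ < ‖y‖ ^ 2 * ‖y‖ ^ 2 := by
              apply mul_lt_mul_of_pos_right hy1 (lt_trans one_pos hy1)
        _ = (‖y‖ ^ 2) ^ 2 := (sq _).symm
      rw [Function.iterate_succ_apply, ih _ h2, h1, ← pow_mul, pow_succ']
  have main : ∀ y : K, ‖c‖ < ‖y‖ ^ 2 →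
      Tendsto (fun k : ℕ => ‖ψ^[k] y‖) atTop atTop := by
    intro y hy
    have h1 : 1 < ‖y‖ := by
      nlinarith [norm_nonneg y]
    have := (tendsto_pow_atTop_atTop_of_one_lt h1).comp
      (tendsto_pow_atTop_atTop_of_one_lt (one_lt_two : 1 < (2 : ℕ)))
    refine this.congr fun k => ?_
    simp [key y hy k]
  rcases lt_or_gt_of_ne hx with h | h
  · -- ‖x‖ ^ 2 < ‖c‖ : after one step we escape
    have h1 : ‖ψ x‖ = ‖c‖ := by
      have hne : ‖x ^ 2‖ ≠ ‖c‖ := by rw [norm_pow]; exact ne_of_lt h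
      rw [hψ]
      simp only
      rw [IsUltrametricDist.norm_add_eq_max_of_norm_ne_norm hne, norm_pow]
      exact max_eq_right (le_of_lt h)
    have h2 : ‖c‖ < ‖ψ x‖ ^ 2 := by
      rw [h1]
      nlinarith
    have := main (ψ x) h2
    rw [← tendsto_add_atTop_iff_nat 1]
    refine this.congr fun k => ?_
    rw [Function.iterate_succ_apply]
  · exact main x h
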